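/- arXiv:1106.2122 — 3 statements merged into one kernel-verified Lean document; each statement's English description precedes it below -/
import Mathlib

section
/- In a 1-safe Petri net with vertex cover VC of its flow graph, if places p1,...,pi are not in VC and all have the same VC-interface, and M is a marking reachable from the initial marking with M(pj)=1 for some j, then no transition enabled at M has any of p1,...,pi as an output place (i.e., adds a token to any of them). -/
/-- A Petri net: places `P`, transitions `T`, incidence functions. -/
structure PetriNet (P T : Type) where
  Pre : P → T → ℕ
  Post : P → T → ℕ

variable {P T : Type}

def enabled (N : PetriNet P T) (M : P → ℕ) (t : T) : Prop := ∀ p, N.Pre p t ≤ M p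

def fire (N : PetriNet P T) (M : P → ℕ) (t : T) : P → ℕ :=
  fun p => M p - N.Pre p t + N.Post p t

def step (N : PetriNet P T) (M M' : P → ℕ) : Prop :=
  ∃ t, enabled N M t ∧ M' = fire N M t

def reachable (N : PetriNet P T) (M0 M : P → ℕ) : Prop :=
  Relation.ReflTransGen (step N) M0 M

/-- `1`-safety: every reachable marking has at most one token per place. -/
def oneSafe (N : PetriNet P T) (M0 : P → ℕ) : Prop :=
  ∀ M, reachable N M0 M → ∀ p, M p ≤ 1

def incident (N : PetriNet P T) (p : P) (t : T) : Prop := 1 ≤ N.Pre p t + N.Post p t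

/-- The flow graph of a Petri net (with a self loop at `p` when `p` is both an
input and an output place of some transition). -/
def flowAdj (N : PetriNet P T) (p1 p2 : P) : Prop :=
  (p1 ≠ p2 ∧ ∃ t, incident N p1 t ∧ incident N p2 t) ∨
  (p1 = p2 ∧ ∃ t, N.Pre p1 t = 1 ∧ N.Post p1 t = 1)

def isVertexCover (N : PetriNet P T) (VC : Set P) : Prop :=
  ∀ p1 p2, flowAdj N p1 p2 → p1 ∈ VC ∨ p2 ∈ VC

/-- The `VC`-neighbourhood of a transition: its input and output places inside `VC`. -/
def nbhd (N : PetriNet P T) (VC : Set P) (t : T) : Set P × Set P :=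
  ({p | p ∈ VC ∧ N.Pre p t = 1}, {p | p ∈ VC ∧ N.Post p t = 1})

def effect (N : PetriNet P T) (p : P) (t : T) : ℤ :=
  (N.Post p t : ℤ) - (N.Pre p t : ℤ)

/-- The `VC`-interface of a place: for each neighbourhood, the set of net effects
`w ∈ {1, -1}` realized on `p` by transitions of that neighbourhood. -/
def interface (N : PetriNet P T) (VC : Set P) (p : P) : Set P × Set P → Set ℤ :=
  fun nb => {w | (w = 1 ∨ w = -1) ∧ ∃ t, nbhd N VC t = nb ∧ effect N p t = w}

/-- In a 1-safe Petri net, if places `ps 0, …, ps (i-1)` outside a vertex cover `VC`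
of the flow graph all have the same `VC`-interface, and a reachable marking `M` puts a
token on one of them, then no transition enabled at `M` adds a token to any of them. -/
theorem oneSafe_same_interface_no_add
    (N : PetriNet P T) (M0 : P → ℕ)
    (h01 : ∀ p t, N.Pre p t ≤ 1 ∧ N.Post p t ≤ 1)
    (hsafe : oneSafe N M0)
    (VC : Set P) (hvc : isVertexCover N VC)
    (i : ℕ) (ps : Fin i → P) (hout : ∀ a, ps a ∉ VC)
    (hintf : ∀ a b, interface N VC (ps a) = interface N VC (ps b))
    (M : P → ℕ) (hreach : reachable N M0 M)
    (j : Fin i) (hj : M (ps j) = 1) :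
    ∀ t, enabled N M t → ∀ a, ¬ (N.Pre (ps a) t = 0 ∧ N.Post (ps a) t = 1) := by
  rintro t ht a ⟨hpre, hpost⟩
  have hmem : (1 : ℤ) ∈ interface N VC (ps a) (nbhd N VC t) :=
    ⟨Or.inl rfl, t, rfl, by simp [effect, hpre, hpost]⟩
  rw [hintf a j] at hmem
  obtain ⟨-, t', hnb, heff⟩ := hmem
  have h1 := h01 (ps j) t'
  have hpost' : N.Post (ps j) t' = 1 := by unfold effect at heff; omega
  have hpre' : N.Pre (ps j) t' = 0 := by unfold effect at heff; omega
  have hen : enabled N M t' := by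
    intro p
    rcases Nat.lt_or_ge (N.Pre p t') 1 with h | h
    · omega
    have hp1 : N.Pre p t' = 1 := le_antisymm (h01 p t').1 h
    by_cases hpvc : p ∈ VC
    · have hmem' : p ∈ (nbhd N VC t).1 := by rw [← hnb]; exact ⟨hpvc, hp1⟩
      have h2 := hmem'.2
      have := ht p
      omega
    · by_cases hpj : p = ps j
      · subst hpj; omega
      · exfalso
        have hadj : flowAdj N p (ps j) :=
          Or.inl ⟨hpj, t', by simp [incident]; omega, by simp [incident]; omega⟩
        rcases hvc _ _ hadj with h' | h'
        · exact hpvc h'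
        · exact hout j h'
  have hreach' : reachable N M0 (fire N M t') := hreach.tail ⟨t', hen, rfl⟩
  have := hsafe _ hreach' (ps j)
  simp [fire, hpre', hpost', hj] at this
end

section
/- Let N be a 1-safe Petri net and let places p1,…,pi (not in vertex cover VC) all have the same VC-interface I. In any run from the initial marking: as long as some pj holds a token, no tokens can be added to any of p1,…,pi; hence the total number of transition firings along any run that remove a token from one of p1,…,pi, before the first marking where all of p1,…,pi are empty, is at most the number of these places initially marked. -/
variable {P T : Type}

/-- In a 1-safe net, for a finite set `S` of places outside the vertex cover that all
share the same `VC`-interface, along any run: as long as some place of `S` is marked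
(positions `j < n`), no transition fired adds a token to a place of `S`, and the number
of firings removing a token from a place of `S` before position `n` is at most the
number of places of `S` marked initially. -/
theorem same_interface_removals_bounded
    (N : PetriNet P T) (M0 : P → ℕ)
    (h01 : ∀ p t, N.Pre p t ≤ 1 ∧ N.Post p t ≤ 1)
    (hsafe : oneSafe N M0)
    (VC : Set P) (hvc : isVertexCover N VC)
    (S : Set P) (hSfin : S.Finite) (hout : ∀ p ∈ S, p ∉ VC)
    (hintf : ∀ p ∈ S, ∀ p' ∈ S, interface N VC p = interface N VC p')
    (M : ℕ → P → ℕ) (τ : ℕ → T) (h0 : M 0 = M0)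
    (hstep : ∀ j, enabled N (M j) (τ j) ∧ M (j + 1) = fire N (M j) (τ j))
    (n : ℕ) (hn : ∀ j < n, ∃ p ∈ S, M j p = 1) :
    (∀ j < n, ∀ p ∈ S, ¬ (N.Pre p (τ j) = 0 ∧ N.Post p (τ j) = 1)) ∧
    Set.ncard {j | j < n ∧ ∃ p ∈ S, N.Pre p (τ j) = 1 ∧ N.Post p (τ j) = 0} ≤
      Set.ncard {p | p ∈ S ∧ M0 p = 1} := by

  classical
  have hreach : ∀ j, reachable N M0 (M j) := by
    intro j
    induction j with
    | zero => rw [h0]; exact Relation.ReflTransGen.refl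
    | succ j ih => exact ih.tail ⟨τ j, (hstep j).1, (hstep j).2⟩
  have hnoadd : ∀ j < n, ∀ p ∈ S, ¬ (N.Pre p (τ j) = 0 ∧ N.Post p (τ j) = 1) := by
    rintro j hj p hp ⟨hpre, hpost⟩
    obtain ⟨q, hq, hqM⟩ := hn j hj
    have h1 : (1:ℤ) ∈ interface N VC p (nbhd N VC (τ j)) :=
      ⟨Or.inl rfl, τ j, rfl, by simp [effect, hpre, hpost]⟩
    rw [hintf p hp q hq] at h1
    obtain ⟨-, t', hnb, heff⟩ := h1
    have hq0 : N.Pre q t' = 0 ∧ N.Post q t' = 1 := by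
      have h1 := (h01 q t').1; have h2 := (h01 q t').2
      unfold effect at heff; omega
    have hen : enabled N (M j) t' := by
      intro p'
      by_cases hc : N.Pre p' t' = 0
      · simp [hc]
      · have hp1 : N.Pre p' t' = 1 := by have := (h01 p' t').1; omega
        have hne : p' ≠ q := fun h => by rw [h] at hp1; exact hc (by omega)
        have hvcp : p' ∈ VC := by
          rcases hvc p' q (Or.inl ⟨hne, t', by unfold incident; omega,
            by unfold incident; omega⟩) with h | h
          · exact h
          · exact absurd h (hout q hq)
        have hmem : p' ∈ (nbhd N VC t').1 := ⟨hvcp, hp1⟩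
        rw [hnb] at hmem
        have : N.Pre p' (τ j) = 1 := hmem.2
        have := (hstep j).1 p'
        omega
    have hr : reachable N M0 (fire N (M j) t') :=
      (hreach j).tail ⟨t', hen, rfl⟩
    have := hsafe _ hr q
    simp [fire, hq0.1, hq0.2, hqM] at this
  refine ⟨hnoadd, ?_⟩
  set Sf := hSfin.toFinset with hSf
  set F : ℕ → ℕ := fun j => ∑ p ∈ Sf, M j p with hF
  set Rp : ℕ → Prop := fun j => ∃ p ∈ S, N.Pre p (τ j) = 1 ∧ N.Post p (τ j) = 0 with hRp
  have hle : ∀ j < n, ∀ p ∈ Sf, M (j+1) p ≤ M j p := by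
    intro j hj p hp
    have hpS : p ∈ S := hSfin.mem_toFinset.mp hp
    have hna := hnoadd j hj p hpS
    have h1 := (h01 p (τ j)).1
    have h2 := (h01 p (τ j)).2
    have hen := (hstep j).1 p
    have hfire : M (j+1) p = M j p - N.Pre p (τ j) + N.Post p (τ j) := by
      rw [(hstep j).2]; rfl
    omega
  have hstrict : ∀ j < n, Rp j → F (j+1) < F j := by
    intro j hj ⟨p, hpS, hp1, hp0⟩
    apply Finset.sum_lt_sum (fun i hi => hle j hj i hi)
    refine ⟨p, hSfin.mem_toFinset.mpr hpS, ?_⟩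
    have hen := (hstep j).1 p
    have hfire : M (j+1) p = M j p - N.Pre p (τ j) + N.Post p (τ j) := by
      rw [(hstep j).2]; rfl
    omega
  have hmono : ∀ j < n, F (j+1) ≤ F j := fun j hj =>
    Finset.sum_le_sum (fun i hi => hle j hj i hi)
  have key : ∀ m, m ≤ n → ((Finset.range m).filter Rp).card + F m ≤ F 0 := by
    intro m hm
    induction m with
    | zero => simp
    | succ m ih =>
      have hmn : m < n := hm
      have ih' := ih (le_of_lt hmn)
      rw [Finset.range_add_one, Finset.filter_insert]
      by_cases hr : Rp m
      · rw [if_pos hr, Finset.card_insert_of_notMem (by simp)]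
        have := hstrict m hmn hr
        omega
      · rw [if_neg hr]
        have := hmono m hmn
        omega
  have hkey := key n le_rfl
  have hF0 : F 0 = (Sf.filter (fun p => M0 p = 1)).card := by
    rw [Finset.card_filter, hF]
    simp only [h0]
    refine Finset.sum_congr rfl (fun p hp => ?_)
    have := hsafe M0 Relation.ReflTransGen.refl p
    split <;> omega
  have hset1 : {j | j < n ∧ Rp j} = ↑((Finset.range n).filter Rp) := by
    ext j; simp [and_comm]
  have hset2 : {p | p ∈ S ∧ M0 p = 1} = ↑(Sf.filter (fun p => M0 p = 1)) := by
    ext p; simp [hSf, hSfin.mem_toFinset]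
  calc Set.ncard {j | j < n ∧ Rp j} = ((Finset.range n).filter Rp).card := by
        rw [hset1, Set.ncard_coe_finset]
    _ ≤ F 0 := by omega
    _ = Set.ncard {p | p ∈ S ∧ M0 p = 1} := by
        rw [hF0, hset2, Set.ncard_coe_finset]
end

section
/- There is a reduction from reachability in 1-safe Petri nets to Signed Digraph Pebbling: given a 1-safe net N, construct the bipartite digraph with red vertices the places and blue vertices the transitions, an A+ arc from p to t whenever Pre(p,t)=1, an A− arc from t to p whenever Pre(p,t)=1 and Post(p,t)=0, and an A+ arc from t to p whenever Pre(p,t)=0 and Post(p,t)=1. Then M1 → t → M2 in N iff from the pebbling state pebbling exactly the places marked in M1, the blue vertex t is enabled and the resulting legal move yields the state pebbling exactly the places marked in M2. -/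
variable {P T : Type}

/-- Arc `p → t` in `A⁺` of the pebbling instance: `Pre p t = 1`. -/
def arcPlusIn (N : PetriNet P T) (p : P) (t : T) : Prop := N.Pre p t = 1
/-- Arc `t → p` in `A⁻`: `Pre p t = 1` and `Post p t = 0`. -/
def arcMinusOut (N : PetriNet P T) (t : T) (p : P) : Prop := N.Pre p t = 1 ∧ N.Post p t = 0
/-- Arc `t → p` in `A⁺`: `Pre p t = 0` and `Post p t = 1`. -/
def arcPlusOut (N : PetriNet P T) (t : T) (p : P) : Prop := N.Pre p t = 0 ∧ N.Post p t = 1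

/-- The blue vertex `t` is enabled at pebbling state `X` (there are no `A⁻` arcs into
blue vertices in this construction, so only the `A⁺` condition remains). -/
def pebEnabled (N : PetriNet P T) (X : Set P) (t : T) : Prop :=
  ∀ p, arcPlusIn N p t → p ∈ X

/-- The legal move using blue vertex `t`: unpebble `A⁻`-successors, pebble `A⁺`-successors. -/
def pebMove (N : PetriNet P T) (X : Set P) (t : T) : Set P :=
  (X \ {p | arcMinusOut N t p}) ∪ {p | arcPlusOut N t p}

/-- Correctness of the translation of a 1-safe Petri net into a Signed Digraph Pebbling
instance: `M1 →t→ M2` in the net iff in the pebbling instance, from the state pebbling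
exactly the places marked in `M1`, the blue vertex `t` is enabled and the legal move
yields the state pebbling exactly the places marked in `M2`. -/
theorem pebbling_simulates_firing
    (N : PetriNet P T) (M0 : P → ℕ)
    (hPre : ∀ p t, N.Pre p t ≤ 1) (hPost : ∀ p t, N.Post p t ≤ 1)
    (hsafe : oneSafe N M0)
    (M1 M2 : P → ℕ) (h1 : reachable N M0 M1) (hM2 : ∀ p, M2 p ≤ 1) (t : T) :
    (enabled N M1 t ∧ M2 = fire N M1 t) ↔
      (pebEnabled N {p | M1 p = 1} t ∧
        pebMove N {p | M1 p = 1} t = {p | M2 p = 1}) := by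
  have hM1 : ∀ p, M1 p ≤ 1 := hsafe M1 h1
  constructor
  · rintro ⟨hen, rfl⟩
    have hfire : ∀ p, fire N M1 t p ≤ 1 :=
      hsafe _ (h1.tail ⟨t, hen, rfl⟩)
    refine ⟨fun p hp => ?_, ?_⟩
    · have h1 := hen p; have h2 := hM1 p
      simp only [arcPlusIn] at hp
      simp only [Set.mem_setOf_eq]; omega
    · ext p
      have h1 := hen p; have h2 := hM1 p; have h3 := hfire p
      simp only [pebMove, arcMinusOut, arcPlusOut, Set.mem_union, Set.mem_diff,
        Set.mem_setOf_eq, fire] at *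
      omega
  · rintro ⟨hpe, hset⟩
    have hen : enabled N M1 t := by
      intro p
      have h2 := hPre p t
      rcases Nat.le_one_iff_eq_zero_or_eq_one.mp h2 with h | h
      · omega
      · have := hpe p h; simp only [Set.mem_setOf_eq] at this; omega
    refine ⟨hen, ?_⟩
    have hfire : ∀ p, fire N M1 t p ≤ 1 :=
      hsafe _ (h1.tail ⟨t, hen, rfl⟩)
    funext p
    have hiff := Set.ext_iff.mp hset p
    have h1 := hen p; have h2 := hM1 p; have h3 := hfire p; have h4 := hM2 p
    simp only [pebMove, arcMinusOut, arcPlusOut, Set.mem_union, Set.mem_diff,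
      Set.mem_setOf_eq] at hiff
    simp only [fire] at *
    omega
end
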